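/- arXiv:2605.17692 — 6 statements merged into one kernel-verified Lean document; each statement's English description precedes it below -/
import Mathlib

section
/- A symmetric matrix W ∈ S_+^d of size d×d satisfies rank(W) ≤ r if and only if there exists W' ∈ S^d with tr(W') = r, 0 ⪯ W' ⪯ I, and ⟨W, I − W'⟩ ≤ 0. -/
open Matrix Finset

section aux

variable {d : ℕ}

open scoped MatrixOrder in
lemma trace_mul_psd_aux {A B : Matrix (Fin d) (Fin d) ℝ} (hA : A.PosSemidef)
    (hB : B.PosSemidef) : 0 ≤ (A * B).trace ∧ ((A * B).trace = 0 → A * B = 0) := by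
  set P := CFC.sqrt A with hP
  set Q := CFC.sqrt B with hQ
  have hPh : Pᴴ = P := (CFC.sqrt_nonneg A).posSemidef.1
  have hQh : Qᴴ = Q := (CFC.sqrt_nonneg B).posSemidef.1
  have hPP : P * P = A := CFC.sqrt_mul_sqrt_self A hA.nonneg
  have hQQ : Q * Q = B := CFC.sqrt_mul_sqrt_self B hB.nonneg
  set M := P * Q with hM
  have key : (A * B).trace = (Mᴴ * M).trace := by
    have h1 : Mᴴ * M = Q * (A * Q) := by
      rw [hM, conjTranspose_mul, hPh, hQh, mul_assoc, ← mul_assoc P P Q, hPP]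
    rw [h1, trace_mul_comm Q (A * Q), Matrix.mul_assoc, hQQ]
  have htr : (Mᴴ * M).trace = ∑ j, ∑ i, (M i j) ^ 2 := by
    simp [Matrix.trace, Matrix.mul_apply, Matrix.diag, sq, Matrix.conjTranspose_apply]
  constructor
  · rw [key, htr]; positivity
  · intro h0
    have hM0 : M = 0 := by
      rw [key, htr] at h0
      ext i j
      have h1 : ∀ j ∈ (univ : Finset (Fin d)), 0 ≤ ∑ i, (M i j) ^ 2 := by
        intro j _; positivity
      have h2 := (Finset.sum_eq_zero_iff_of_nonneg h1).mp h0 j (mem_univ j)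
      have h3 : ∀ i ∈ (univ : Finset (Fin d)), 0 ≤ (M i j) ^ 2 := by
        intro i _; positivity
      have h4 := (Finset.sum_eq_zero_iff_of_nonneg h3).mp h2 i (mem_univ i)
      exact pow_eq_zero_iff (n := 2) (by norm_num) |>.mp h4
    calc A * B = P * M * Q := by
          rw [hM, ← hPP, ← hQQ]; simp only [Matrix.mul_assoc]
    _ = 0 := by rw [hM0, mul_zero, zero_mul]

end aux

/-- W ∈ S_+^d satisfies rank(W) ≤ r iff there exists symmetric W' with
tr(W') = r, 0 ⪯ W' ⪯ I and ⟨W, I - W'⟩ ≤ 0. -/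
theorem stmt_2 (d r : ℕ) (hr : r ≤ d) (W : Matrix (Fin d) (Fin d) ℝ)
    (hW : W.PosSemidef) :
    W.rank ≤ r ↔ ∃ W' : Matrix (Fin d) (Fin d) ℝ, W'.IsSymm ∧
      W'.trace = (r : ℝ) ∧ W'.PosSemidef ∧ (1 - W').PosSemidef ∧
      (Wᵀ * (1 - W')).trace ≤ 0 := by
  have hWsymm : Wᵀ = W := by
    have h := hW.1.eq
    rwa [Matrix.conjTranspose_eq_transpose_of_trivial] at h
  constructor
  · -- forward direction
    intro hrank
    have hH := hW.1
    set μ := hH.eigenvalues with hμ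
    set U : Matrix (Fin d) (Fin d) ℝ := (hH.eigenvectorUnitary : Matrix (Fin d) (Fin d) ℝ) with hU
    have hUU : star U * U = 1 := Unitary.coe_star_mul_self hH.eigenvectorUnitary
    have hUU' : U * star U = 1 := Unitary.coe_mul_star_self hH.eigenvectorUnitary
    have hspec : W = U * diagonal μ * star U := by
      have h := hH.spectral_theorem
      simpa [RCLike.ofReal_real_eq_id] using h
    have hScard : (univ.filter (fun i => μ i ≠ 0)).card ≤ r := by
      rw [hH.rank_eq_card_non_zero_eigs, Fintype.card_subtype] at hrank
      exact hrank
    obtain ⟨T, hST, -, hTcard⟩ := Finset.exists_subsuperset_card_eq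
      (Finset.subset_univ (univ.filter (fun i => μ i ≠ 0))) hScard (by simpa using hr)
    set χ : Fin d → ℝ := fun i => if i ∈ T then 1 else 0 with hχ
    have hχnn : 0 ≤ χ := by
      intro i; simp only [hχ]; split <;> norm_num
    have hχpsd : (Matrix.diagonal χ).PosSemidef := PosSemidef.diagonal hχnn
    have hpsd : (U * Matrix.diagonal χ * star U).PosSemidef := by
      have := hχpsd.mul_mul_conjTranspose_same U
      rwa [← Matrix.star_eq_conjTranspose] at this
    have hone : U * Matrix.diagonal (fun i => (1:ℝ) - χ i) * star U
        = 1 - U * Matrix.diagonal χ * star U := by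
      have : Matrix.diagonal (fun i => (1:ℝ) - χ i) = 1 - Matrix.diagonal χ := by
        rw [← Matrix.diagonal_one, Matrix.diagonal_sub]
      rw [this, Matrix.mul_sub, Matrix.sub_mul, Matrix.mul_one, hUU']
    refine ⟨U * Matrix.diagonal χ * star U, ?_, ?_, hpsd, ?_, ?_⟩
    · -- symmetric
      have h := hpsd.1.eq
      rw [Matrix.conjTranspose_eq_transpose_of_trivial] at h
      exact h
    · -- trace
      rw [Matrix.trace_mul_comm, ← Matrix.mul_assoc, hUU, Matrix.one_mul,
        Matrix.trace_diagonal]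
      rw [hχ]
      rw [Finset.sum_ite_mem, Finset.univ_inter, Finset.sum_const, hTcard]
      simp
    · -- 1 - W' psd
      rw [← hone]
      have hnn : 0 ≤ fun i => (1:ℝ) - χ i := by
        intro i; simp only [hχ]; split <;> norm_num
      have := (PosSemidef.diagonal hnn).mul_mul_conjTranspose_same U
      rwa [← Matrix.star_eq_conjTranspose] at this
    · -- trace condition
      have hfun : (fun i => μ i * χ i) = μ := by
        funext i
        by_cases h : μ i = 0
        · simp [h]
        · have hiT : i ∈ T := hST (by simp [h])
          simp [hχ, hiT]
      have hdiag : diagonal μ * diagonal χ = diagonal μ := by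
        rw [Matrix.diagonal_mul_diagonal, hfun]
      have hmul : W * (U * Matrix.diagonal χ * star U) = W := by
        conv_lhs => rw [hspec]
        calc U * diagonal μ * star U * (U * diagonal χ * star U)
            = U * diagonal μ * (star U * U) * diagonal χ * star U := by
              simp only [Matrix.mul_assoc]
          _ = U * (diagonal μ * diagonal χ) * star U := by
              rw [hUU, Matrix.mul_one]; simp only [Matrix.mul_assoc]
          _ = W := by rw [hdiag, ← hspec]
      rw [hWsymm, Matrix.mul_sub, Matrix.mul_one, hmul, sub_self, Matrix.trace_zero]
  · -- backward direction
    rintro ⟨W', hsymm, htrace, hpsd, hpsd1, htr⟩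
    have hW'herm : W'.IsHermitian := by
      show W'ᴴ = W'
      rw [Matrix.conjTranspose_eq_transpose_of_trivial]
      exact hsymm
    -- trace is zero, product is zero
    have h0 : (W * (1 - W')).trace = 0 :=
      le_antisymm (hWsymm ▸ htr) (trace_mul_psd_aux hW hpsd1).1
    have hprod : W * (1 - W') = 0 := (trace_mul_psd_aux hW hpsd1).2 h0
    have hWW' : W * W' = W := by
      have := hprod
      rw [Matrix.mul_sub, Matrix.mul_one, sub_eq_zero] at this
      exact this.symm
    -- spectral decomposition of W'
    set μ := hW'herm.eigenvalues with hμ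
    set U : Matrix (Fin d) (Fin d) ℝ :=
      (hW'herm.eigenvectorUnitary : Matrix (Fin d) (Fin d) ℝ) with hU
    have hUU : star U * U = 1 := Unitary.coe_star_mul_self hW'herm.eigenvectorUnitary
    have hUU' : U * star U = 1 := Unitary.coe_mul_star_self hW'herm.eigenvectorUnitary
    have hspec : W' = U * diagonal μ * star U := by
      have h := hW'herm.spectral_theorem
      simpa [RCLike.ofReal_real_eq_id] using h
    have hμnn : ∀ i, 0 ≤ μ i := fun i => hpsd.eigenvalues_nonneg i
    -- sum of eigenvalues = trace = r
    have hsum : ∑ i, μ i = (r : ℝ) := by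
      rw [← htrace, hspec, Matrix.trace_mul_comm, ← Matrix.mul_assoc, hUU,
        Matrix.one_mul, Matrix.trace_diagonal]
    set T : Finset (Fin d) := univ.filter (fun i => μ i = 1) with hT
    have hTr : (T.card : ℝ) ≤ (r : ℝ) := by
      calc (T.card : ℝ) = ∑ i ∈ T, μ i := by
            rw [Finset.sum_congr rfl (fun i hi => by
              simp only [hT, Finset.mem_filter] at hi; rw [hi.2]),
              Finset.sum_const, nsmul_eq_mul, mul_one]
      _ ≤ ∑ i, μ i := Finset.sum_le_sum_of_subset_of_nonneg (Finset.subset_univ T)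
            (fun i _ _ => hμnn i)
      _ = (r : ℝ) := hsum
    have hTcard : T.card ≤ r := by exact_mod_cast hTr
    -- V := star U * W * U
    set V : Matrix (Fin d) (Fin d) ℝ := star U * W * U with hV
    have hWV : W = U * V * star U := by
      rw [hV, ← Matrix.mul_assoc, ← Matrix.mul_assoc, hUU', Matrix.one_mul,
        Matrix.mul_assoc, hUU', Matrix.mul_one]
    have hVD : V * diagonal μ = V := by
      have h1 : star U * (W * W') * U = V * diagonal μ := by
        rw [hspec]
        calc star U * (W * (U * diagonal μ * star U)) * U
            = (star U * W * U) * diagonal μ * (star U * U) := by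
              simp only [Matrix.mul_assoc]
          _ = V * diagonal μ := by rw [hUU, Matrix.mul_one, hV]
      rw [hWW'] at h1
      rw [← h1, hV]
    set χ : Fin d → ℝ := fun i => if μ i = 1 then 1 else 0 with hχ
    have hVχ : V * diagonal χ = V := by
      ext i j
      rw [Matrix.mul_diagonal]
      by_cases h : μ j = 1
      · simp [hχ, h]
      · have h2 : V i j * μ j = V i j := by
          have := congrFun (congrFun hVD i) j
          rwa [Matrix.mul_diagonal] at this
        have h3 : V i j = 0 := by
          have h4 : V i j * (μ j - 1) = 0 := by rw [mul_sub, mul_one, h2, sub_self]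
          rcases mul_eq_zero.mp h4 with h5 | h5
          · exact h5
          · exact absurd (by linarith) h
        simp [hχ, h, h3]
    -- rank computation
    have hUdet : IsUnit U.det := by
      apply IsUnit.of_mul_eq_one (star U).det
      rw [← Matrix.det_mul, hUU']
      simp
    have hsUdet : IsUnit (star U).det := by
      apply IsUnit.of_mul_eq_one U.det
      rw [← Matrix.det_mul, hUU]
      simp
    have hrankVW : W.rank = V.rank := by
      rw [hWV, Matrix.mul_assoc, Matrix.rank_mul_eq_right_of_isUnit_det U _ hUdet,
        Matrix.rank_mul_eq_left_of_isUnit_det (star U) V hsUdet]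
    have hrankV : V.rank ≤ T.card := by
      calc V.rank = (V * diagonal χ).rank := by rw [hVχ]
        _ ≤ (diagonal χ).rank := Matrix.rank_mul_le_right V (diagonal χ)
        _ = Fintype.card {i // χ i ≠ 0} := Matrix.rank_diagonal χ
        _ = T.card := by
            rw [Fintype.card_subtype]
            congr 1
            apply Finset.filter_congr
            intro i _
            simp only [hχ, hT]
            constructor
            · intro h; by_contra h2; simp [h2] at h
            · intro h; simp [h]
    calc W.rank = V.rank := hrankVW
      _ ≤ T.card := hrankV
      _ ≤ r := hTcard
end

section
/- Let r = min_{0 ≤ k ≤ N} d_k. For every matrix M ∈ ℝ^{d_N×d_0} with rank(M) ≤ r, there exist matrices W_k ∈ ℝ^{d_k×d_{k-1}} for k = 1,…,N such that W_N ⋯ W_1 = M. Consequently, the set of products {W_N ⋯ W_1} equals the set of d_N×d_0 matrices of rank at most r. -/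
open Matrix

/-- The product W_N ⋯ W_1 (with W_k ∈ ℝ^{d_k × d_{k-1}}). -/
def chainProd (d : ℕ → ℕ)
    (W : ∀ k : ℕ, Matrix (Fin (d (k + 1))) (Fin (d k)) ℝ) :
    ∀ N : ℕ, Matrix (Fin (d N)) (Fin (d 0)) ℝ
  | 0 => 1
  | N + 1 => W N * chainProd d W N

/-- Embedding matrix: first `r` standard basis columns in `ℝ^m`. -/
def embMat (r m : ℕ) : Matrix (Fin m) (Fin r) ℝ :=
  Matrix.of fun i x => if (i : ℕ) = (x : ℕ) then 1 else 0

lemma embMat_transpose_mul (r m : ℕ) (h : r ≤ m) :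
    (embMat r m)ᵀ * embMat r m = 1 := by
  ext x y
  simp only [Matrix.mul_apply, Matrix.transpose_apply, embMat, Matrix.of_apply,
    Matrix.one_apply]
  rw [Finset.sum_eq_single (Fin.castLE h x)]
  · simp [Fin.ext_iff]
  · intro i _ hi
    have : (i : ℕ) ≠ (x : ℕ) := by
      intro hix
      exact hi (Fin.ext (by simpa using hix))
    simp [this]
  · simp

/-- Rank factorization: if rank M ≤ r, then M = A * B with inner dimension r. -/
lemma exists_rank_factorization {m n r : ℕ} (M : Matrix (Fin m) (Fin n) ℝ)
    (h : M.rank ≤ r) :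
    ∃ (A : Matrix (Fin m) (Fin r) ℝ) (B : Matrix (Fin r) (Fin n) ℝ), A * B = M := by
  classical
  set L : (Fin n → ℝ) →ₗ[ℝ] (Fin m → ℝ) := M.mulVecLin with hL
  set p : Submodule ℝ (Fin m → ℝ) := LinearMap.range L with hp
  have ht : Module.finrank ℝ p ≤ r := h
  let b := Module.finBasis ℝ p
  let e : p ≃ₗ[ℝ] (Fin (Module.finrank ℝ p) → ℝ) := b.equivFun
  let j : (Fin (Module.finrank ℝ p) → ℝ) →ₗ[ℝ] (Fin r → ℝ) :=
    Function.ExtendByZero.linearMap ℝ (Fin.castLE ht)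
  let q : (Fin r → ℝ) →ₗ[ℝ] (Fin (Module.finrank ℝ p) → ℝ) :=
    LinearMap.funLeft ℝ ℝ (Fin.castLE ht)
  have hqj : ∀ x, q (j x) = x := by
    intro x
    funext i
    exact (Fin.castLE_injective ht).extend_apply x 0 i
  let f : (Fin n → ℝ) →ₗ[ℝ] (Fin r → ℝ) :=
    j ∘ₗ (e : p →ₗ[ℝ] (Fin (Module.finrank ℝ p) → ℝ)) ∘ₗ L.rangeRestrict
  let g : (Fin r → ℝ) →ₗ[ℝ] (Fin m → ℝ) :=
    p.subtype ∘ₗ (e.symm : (Fin (Module.finrank ℝ p) → ℝ) →ₗ[ℝ] p) ∘ₗ q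
  have hgf : g ∘ₗ f = L := by
    ext x
    simp [f, g, hqj]
  refine ⟨LinearMap.toMatrix' g, LinearMap.toMatrix' f, ?_⟩
  rw [← LinearMap.toMatrix'_comp, hgf, hL, ← Matrix.toLin'_apply',
    LinearMap.toMatrix'_toLin']

/-- chainProd only depends on the first n factors. -/
lemma chainProd_congr (d : ℕ → ℕ)
    (W W' : ∀ k : ℕ, Matrix (Fin (d (k + 1))) (Fin (d k)) ℝ) :
    ∀ n : ℕ, (∀ k < n, W k = W' k) → chainProd d W n = chainProd d W' n := by
  intro n
  induction n with
  | zero => intro _; rfl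
  | succ n ih =>
    intro hW
    show W n * chainProd d W n = W' n * chainProd d W' n
    rw [hW n (Nat.lt_succ_self n), ih (fun k hk => hW k (hk.trans (Nat.lt_succ_self n)))]

lemma chainProd_rank_le (d : ℕ → ℕ)
    (W : ∀ k : ℕ, Matrix (Fin (d (k + 1))) (Fin (d k)) ℝ) :
    ∀ n : ℕ, ∀ m ≤ n, (chainProd d W n).rank ≤ d m := by
  intro n
  induction n with
  | zero =>
    intro m hm
    interval_cases m
    exact (chainProd d W 0).rank_le_width
  | succ n ih =>
    intro m hm
    rcases Nat.lt_succ_iff_lt_or_eq.mp (Nat.lt_succ_of_le hm) with h | h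
    · rcases Nat.lt_succ_iff.mp (Nat.lt_succ_of_lt h) with h'
      calc (chainProd d W (n + 1)).rank
          = (W n * chainProd d W n).rank := rfl
        _ ≤ (chainProd d W n).rank := Matrix.rank_mul_le_right _ _
        _ ≤ d m := ih m (Nat.lt_succ_iff.mp h)
    · subst h
      exact (chainProd d W (n + 1)).rank_le_height

/-- With r = min_k d_k, every M with rank(M) ≤ r is realizable as W_N ⋯ W_1;
consequently the set of such products is exactly the set of matrices of rank ≤ r. -/
theorem stmt_9 (N : ℕ) (hN : 1 ≤ N) (d : ℕ → ℕ) (hd : ∀ k, 0 < d k) (r : ℕ)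
    (hr : r = (Finset.range (N + 1)).inf' Finset.nonempty_range_add_one d) :
    (∀ M : Matrix (Fin (d N)) (Fin (d 0)) ℝ, M.rank ≤ r →
        ∃ W : ∀ k : ℕ, Matrix (Fin (d (k + 1))) (Fin (d k)) ℝ, chainProd d W N = M) ∧
    {M : Matrix (Fin (d N)) (Fin (d 0)) ℝ |
        ∃ W : ∀ k : ℕ, Matrix (Fin (d (k + 1))) (Fin (d k)) ℝ, chainProd d W N = M} =
      {M : Matrix (Fin (d N)) (Fin (d 0)) ℝ | M.rank ≤ r} := by
  classical
  have hrle : ∀ k ≤ N, r ≤ d k := by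
    intro k hk
    rw [hr]
    exact Finset.inf'_le d (Finset.mem_range.mpr (Nat.lt_succ_of_le hk))
  have key : ∀ M : Matrix (Fin (d N)) (Fin (d 0)) ℝ, M.rank ≤ r →
      ∃ W : ∀ k : ℕ, Matrix (Fin (d (k + 1))) (Fin (d k)) ℝ, chainProd d W N = M := by
    obtain ⟨N', rfl⟩ : ∃ N', N = N' + 1 := ⟨N - 1, (Nat.succ_pred_eq_of_pos hN).symm⟩
    intro M hM
    obtain ⟨A, B, hAB⟩ := exists_rank_factorization M hM
    rcases Nat.eq_zero_or_pos N' with hN' | hN'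
    · subst hN'
      refine ⟨fun k => Nat.rec M (fun k _ => 0) k, ?_⟩
      show M * chainProd d _ 0 = M
      show M * 1 = M
      rw [Matrix.mul_one]
    · -- N' ≥ 1 : use the embedding scheme
      set W0 : ∀ k : ℕ, Matrix (Fin (d (k + 1))) (Fin (d k)) ℝ :=
        fun k => Nat.rec (embMat r (d 1) * B)
          (fun k _ => embMat r (d (k + 2)) * (embMat r (d (k + 1)))ᵀ) k with hW0
      have hW0succ : ∀ k, W0 (k + 1) = embMat r (d (k + 2)) * (embMat r (d (k + 1)))ᵀ :=
        fun k => rfl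
      have hmid : ∀ n, 1 ≤ n → n ≤ N' → chainProd d W0 n = embMat r (d n) * B := by
        intro n
        induction n with
        | zero => intro h; exact absurd h (by norm_num)
        | succ n ih =>
          intro _ hn
          rcases Nat.eq_zero_or_pos n with h0 | h0
          · subst h0
            show W0 0 * chainProd d W0 0 = _
            show (embMat r (d 1) * B) * 1 = _
            rw [Matrix.mul_one]
          · have hnN : n ≤ N' := Nat.le_of_succ_le hn
            calc chainProd d W0 (n + 1)
                = W0 n * chainProd d W0 n := rfl
              _ = (embMat r (d (n + 1)) * (embMat r (d n))ᵀ) * (embMat r (d n) * B) := by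
                  obtain ⟨n', rfl⟩ : ∃ n', n = n' + 1 := ⟨n - 1, (Nat.succ_pred_eq_of_pos h0).symm⟩
                  rw [hW0succ, ih h0 hnN]
              _ = embMat r (d (n + 1)) * ((embMat r (d n))ᵀ * embMat r (d n)) * B := by
                  simp [Matrix.mul_assoc]
              _ = embMat r (d (n + 1)) * B := by
                  rw [embMat_transpose_mul r (d n) (hrle n (hnN.trans (Nat.le_succ N'))),
                    Matrix.mul_one]
      set W : ∀ k : ℕ, Matrix (Fin (d (k + 1))) (Fin (d k)) ℝ :=
        fun k => if hk : k = N' then hk ▸ (A * (embMat r (d N'))ᵀ) else W0 k with hW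
      have hWN' : W N' = A * (embMat r (d N'))ᵀ := by
        simp [hW]
      have hWlt : ∀ k < N', W k = W0 k := by
        intro k hk
        simp [hW, Nat.ne_of_lt hk]
      refine ⟨W, ?_⟩
      calc chainProd d W (N' + 1)
          = W N' * chainProd d W N' := rfl
        _ = (A * (embMat r (d N'))ᵀ) * chainProd d W0 N' := by
            rw [hWN', chainProd_congr d W W0 N' hWlt]
        _ = (A * (embMat r (d N'))ᵀ) * (embMat r (d N') * B) := by
            rw [hmid N' hN' le_rfl]
        _ = A * ((embMat r (d N'))ᵀ * embMat r (d N')) * B := by simp [Matrix.mul_assoc]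
        _ = M := by
            rw [embMat_transpose_mul r (d N') (hrle N' (Nat.le_succ N')), Matrix.mul_one, hAB]
  refine ⟨key, ?_⟩
  ext M
  simp only [Set.mem_setOf_eq]
  constructor
  · rintro ⟨W, rfl⟩
    rw [hr]
    apply Finset.le_inf'
    intro k hk
    exact chainProd_rank_le d W N k (Nat.lt_succ_iff.mp (Finset.mem_range.mp hk))
  · exact key M
end

section
/- The infimum over (W_1,…,W_N) of (1/(2n))‖W_N ⋯ W_1 X − Y‖_F² equals the infimum over U ∈ ℝ^{d_N×r}, V ∈ ℝ^{d_0×r} of (1/(2n))‖U Vᵀ X − Y‖_F², where r = min_k d_k. -/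
open Matrix

/-- Squared Frobenius norm: ‖M‖_F² = tr(MᵀM). -/
noncomputable def frobSq {m n : Type*} [Fintype m] [Fintype n] [DecidableEq n]
    (M : Matrix m n ℝ) : ℝ := (Mᵀ * M).trace

noncomputable def emb (r m : ℕ) : Matrix (Fin m) (Fin r) ℝ :=
  Matrix.of fun i j => if (i : ℕ) = (j : ℕ) then 1 else 0

lemma emb_tmul (r m : ℕ) (h : r ≤ m) : (emb r m)ᵀ * (emb r m) = 1 := by
  ext i j
  simp only [Matrix.mul_apply, Matrix.transpose_apply, emb, Matrix.of_apply,
    Matrix.one_apply, ite_mul, one_mul, zero_mul]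
  rw [Finset.sum_eq_single (⟨(i : ℕ), lt_of_lt_of_le i.2 h⟩ : Fin m)]
  · by_cases hij : (i : Fin r) = j
    · subst hij; simp
    · simp [Fin.val_inj, hij]
  · intro b _ hb
    rw [if_neg]
    intro hc
    exact hb (Fin.ext hc)
  · simp

lemma fin_cast_id {m : ℕ} (h : m = m) : Fin.cast h = id := by
  funext i; exact Fin.ext rfl

lemma chain_split (d : ℕ → ℕ) (W : ∀ k : ℕ, Matrix (Fin (d (k + 1))) (Fin (d k)) ℝ)
    (k : ℕ) : ∀ N, k ≤ N → ∃ A : Matrix (Fin (d N)) (Fin (d k)) ℝ,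
      chainProd d W N = A * chainProd d W k := by
  intro N
  induction N with
  | zero =>
    intro h
    obtain rfl : k = 0 := Nat.le_zero.mp h
    exact ⟨1, by simp⟩
  | succ M ih =>
    intro h
    rcases Nat.lt_or_ge k (M + 1) with h' | h'
    · obtain ⟨A, hA⟩ := ih (Nat.lt_succ_iff.mp h')
      exact ⟨W M * A, by simp [chainProd, hA, Matrix.mul_assoc]⟩
    · obtain rfl : k = M + 1 := le_antisymm h h'
      exact ⟨1, by simp⟩

/-- The deep-linear-network training objective has the same infimum as the shallow
factorized objective with bottleneck width r = min_k d_k. -/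
theorem stmt_10 (N n : ℕ) (hN : 1 ≤ N) (hn : 1 ≤ n) (d : ℕ → ℕ) (hd : ∀ k, 0 < d k)
    (r : ℕ) (hr : r = (Finset.range (N + 1)).inf' Finset.nonempty_range_add_one d)
    (X : Matrix (Fin (d 0)) (Fin n) ℝ) (Y : Matrix (Fin (d N)) (Fin n) ℝ) :
    sInf {c : ℝ | ∃ W : ∀ k : ℕ, Matrix (Fin (d (k + 1))) (Fin (d k)) ℝ,
        c = (1 / (2 * n)) * frobSq (chainProd d W N * X - Y)} =
    sInf {c : ℝ | ∃ (U : Matrix (Fin (d N)) (Fin r) ℝ)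
        (V : Matrix (Fin (d 0)) (Fin r) ℝ),
        c = (1 / (2 * n)) * frobSq (U * Vᵀ * X - Y)} := by
  have hrle : ∀ k, k ≤ N → r ≤ d k := by
    intro k hk
    rw [hr]
    exact Finset.inf'_le d (Finset.mem_range.mpr (Nat.lt_succ_of_le hk))
  congr 1
  ext c
  constructor
  · -- deep ⟶ shallow : factor chainProd through the bottleneck dimension
    rintro ⟨W, rfl⟩
    obtain ⟨k, hkmem, hkd⟩ := Finset.exists_mem_eq_inf' Finset.nonempty_range_add_one d
    have hkN : k ≤ N := Nat.lt_succ_iff.mp (Finset.mem_range.mp hkmem)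
    have hdk : d k = r := by rw [hr, hkd]
    obtain ⟨A, hA⟩ := chain_split d W k N hkN
    refine ⟨A.submatrix id (Fin.cast hdk.symm), ((chainProd d W k).submatrix (Fin.cast hdk.symm) id)ᵀ, ?_⟩
    have : A.submatrix id (Fin.cast hdk.symm) *
        (((chainProd d W k).submatrix (Fin.cast hdk.symm) id)ᵀ)ᵀ =
        chainProd d W N := by
      rw [Matrix.transpose_transpose, hA]
      exact (Matrix.submatrix_mul_equiv A (chainProd d W k) id (finCongr hdk.symm)
        id).trans (Matrix.submatrix_id_id _)
    rw [this]
  · -- shallow ⟶ deep : realize U Vᵀ as a chain product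
    rintro ⟨U, V, rfl⟩
    classical
    set Q : ∀ k : ℕ, Matrix (Fin (d k)) (Fin r) ℝ := fun k =>
      if h : k = N then U.submatrix (Fin.cast (congrArg d h)) id
      else if h0 : k = 0 then V.submatrix (Fin.cast (congrArg d h0)) id
      else emb r (d k) with hQ
    refine ⟨fun k => Q (k + 1) * (Q k)ᵀ, ?_⟩
    have h0N : (0 : ℕ) ≠ N := by omega
    have hQ0 : Q 0 = V := by
      show (if h : (0:ℕ) = N then U.submatrix (Fin.cast (congrArg d h)) id
        else if h0 : (0:ℕ) = 0 then V.submatrix (Fin.cast (congrArg d h0)) id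
        else emb r (d 0)) = V
      rw [dif_neg h0N, dif_pos rfl, fin_cast_id, Matrix.submatrix_id_id]
    have hQN : Q N = U := by
      show (if h : N = N then U.submatrix (Fin.cast (congrArg d h)) id
        else if h0 : N = 0 then V.submatrix (Fin.cast (congrArg d h0)) id
        else emb r (d N)) = U
      rw [dif_pos rfl, fin_cast_id, Matrix.submatrix_id_id]
    have hQmid : ∀ k, k ≠ 0 → k ≠ N → Q k = emb r (d k) := by
      intro k h0 hN'
      rw [hQ]; simp [h0, hN']
    have key : ∀ k, 1 ≤ k → k ≤ N →
        chainProd d (fun k => Q (k + 1) * (Q k)ᵀ) k = Q k * Vᵀ := by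
      intro k
      induction k with
      | zero => intro h; omega
      | succ m ih =>
        intro _ hm
        rcases Nat.eq_zero_or_pos m with rfl | hm1
        · show Q 1 * (Q 0)ᵀ * chainProd d _ 0 = Q 1 * Vᵀ
          rw [show chainProd d (fun k => Q (k + 1) * (Q k)ᵀ) 0 = 1 from rfl]
          rw [Matrix.mul_one, hQ0]
        · have hmN : m ≠ N := by omega
          have hm0 : m ≠ 0 := by omega
          show Q (m + 1) * (Q m)ᵀ * chainProd d _ m = Q (m + 1) * Vᵀ
          rw [ih hm1 (by omega), hQmid m hm0 hmN, Matrix.mul_assoc,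
            ← Matrix.mul_assoc ((emb r (d m))ᵀ), emb_tmul r (d m) (hrle m (by omega)),
            Matrix.one_mul]
    have : chainProd d (fun k => Q (k + 1) * (Q k)ᵀ) N = U * Vᵀ := by
      rw [key N hN le_rfl, hQN]
    rw [this]
end

section
/- The infimum of (1/(2n))‖U Vᵀ X − Y‖_F² over U ∈ ℝ^{d_N×r}, V ∈ ℝ^{d_0×r} equals the infimum of (1/(2n))‖P_uᵀ W P_v X − Y‖_F² over symmetric positive semidefinite W ∈ S_+^{d_N+d_0} with rank(W) ≤ r, where P_u = [I_{d_N}; 0] and P_v = [0; I_{d_0}] are the block selection matrices. -/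
open Matrix

/-- Block selection matrix P_u = [I_{dN}; 0]. -/
def Pu (dN d0 : ℕ) : Matrix (Fin dN ⊕ Fin d0) (Fin dN) ℝ :=
  fun i j => if i = Sum.inl j then 1 else 0

/-- Block selection matrix P_v = [0; I_{d0}]. -/
def Pv (dN d0 : ℕ) : Matrix (Fin dN ⊕ Fin d0) (Fin d0) ℝ :=
  fun i j => if i = Sum.inr j then 1 else 0

lemma psd_rank_factor {m : Type*} [Fintype m] [DecidableEq m] (r : ℕ)
    (W : Matrix m m ℝ) (hW : W.PosSemidef) (hr : W.rank ≤ r) :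
    ∃ B : Matrix m (Fin r) ℝ, W = B * Bᵀ := by
  classical
  have hH := hW.isHermitian
  set eig := hH.eigenvalues with heig
  set Q : Matrix m m ℝ := (hH.eigenvectorUnitary : Matrix m m ℝ) with hQ
  have hspec : W = Q * diagonal (RCLike.ofReal ∘ eig) * star Q := hH.spectral_theorem
  have hcard : Fintype.card {i // eig i ≠ 0} ≤ r := hH.rank_eq_card_non_zero_eigs ▸ hr
  obtain ⟨e⟩ : Nonempty ({i // eig i ≠ 0} ↪ Fin r) :=
    Function.Embedding.nonempty_of_card_le (by simpa using hcard)
  set D : Matrix m m ℝ := diagonal (fun i => Real.sqrt (eig i)) with hD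
  set B0 : Matrix m m ℝ := Q * D with hB0
  have hW0 : W = B0 * B0ᵀ := by
    have hfun : (fun i => Real.sqrt (eig i) * Real.sqrt (eig i)) = RCLike.ofReal ∘ eig := by
      funext i
      simp [Real.mul_self_sqrt (hW.eigenvalues_nonneg i)]
      exact Real.mul_self_sqrt (hW.eigenvalues_nonneg i)
    have hDD : D * D = diagonal (RCLike.ofReal ∘ eig) := by
      rw [hD, diagonal_mul_diagonal, hfun]
    calc W = Q * (D * D) * Qᵀ := by rw [hDD, hspec]; rfl
      _ = B0 * B0ᵀ := by
            rw [hB0, transpose_mul, hD, diagonal_transpose]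
            simp only [Matrix.mul_assoc]
  set E : Matrix m (Fin r) ℝ :=
    fun i j => if h : eig i ≠ 0 then (if e ⟨i, h⟩ = j then 1 else 0) else 0 with hE
  refine ⟨B0 * E, ?_⟩
  have hEE : E * Eᵀ = diagonal (fun i => if eig i ≠ 0 then 1 else 0) := by
    ext i i'
    simp only [mul_apply, transpose_apply, diagonal_apply]
    simp only [hE]
    by_cases h : eig i ≠ 0
    · by_cases h' : eig i' ≠ 0
      · simp only [dif_pos h, dif_pos h', ite_mul, one_mul, zero_mul, ← ite_and]
        by_cases hii : i = i'
        · subst hii; simp [Finset.sum_ite_eq, h]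
        · have hne : e ⟨i, h⟩ ≠ e ⟨i', h'⟩ := by
            intro hc
            exact hii (congrArg Subtype.val (e.injective hc))
          have hz : ∀ j ∈ Finset.univ, (if e ⟨i, h⟩ = j ∧ e ⟨i', h'⟩ = j then (1:ℝ) else 0) = 0 := by
            intro j _
            rw [if_neg]
            rintro ⟨rfl, h2⟩
            exact hne h2.symm
          rw [Finset.sum_eq_zero hz]
          simp [hii]
      · have hii : i ≠ i' := by rintro rfl; exact h' h
        simp [dif_neg h', hii]
    · have hii' : ¬(i = i' ∧ eig i' ≠ 0) := by rintro ⟨rfl, h'⟩; exact h h'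
      simp only [dif_neg h, zero_mul, Finset.sum_const_zero]
      by_cases hii : i = i'
      · subst hii; simp [h]
      · simp [hii]
  have hfun2 : (fun i => Real.sqrt (eig i) * (if eig i ≠ 0 then 1 else 0))
      = fun i => Real.sqrt (eig i) := by
    funext i
    by_cases h : eig i = 0 <;> simp [h]
  have hB0diag : B0 * diagonal (fun i => if eig i ≠ 0 then 1 else 0) = B0 := by
    rw [hB0, mul_assoc, hD, diagonal_mul_diagonal, hfun2]
  clear_value E B0 D Q
  calc W = B0 * B0ᵀ := hW0
    _ = B0 * (E * Eᵀ) * B0ᵀ := by rw [hEE, hB0diag]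
    _ = (B0 * E) * (B0 * E)ᵀ := by rw [transpose_mul]; simp only [Matrix.mul_assoc]

lemma PuT_mul {dN d0 r : ℕ} (B : Matrix (Fin dN ⊕ Fin d0) (Fin r) ℝ) :
    (Pu dN d0)ᵀ * B = Matrix.of fun j c => B (Sum.inl j) c := by
  ext j c
  rw [mul_apply, Fintype.sum_sum_type]
  simp [Pu, Finset.sum_ite_eq, Sum.inl.injEq]

lemma PvT_mul {dN d0 r : ℕ} (B : Matrix (Fin dN ⊕ Fin d0) (Fin r) ℝ) :
    (Pv dN d0)ᵀ * B = Matrix.of fun j c => B (Sum.inr j) c := by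
  ext j c
  rw [mul_apply, Fintype.sum_sum_type]
  simp [Pv, Finset.sum_ite_eq, Sum.inr.injEq]

lemma sandwich {dN d0 r : ℕ} (B : Matrix (Fin dN ⊕ Fin d0) (Fin r) ℝ) :
    (Pu dN d0)ᵀ * (B * Bᵀ) * Pv dN d0 = ((Pu dN d0)ᵀ * B) * ((Pv dN d0)ᵀ * B)ᵀ := by
  rw [transpose_mul, transpose_transpose, ← Matrix.mul_assoc, ← Matrix.mul_assoc,
    Matrix.mul_assoc ((Pu dN d0)ᵀ * B)]

/-- The shallow factorized objective has the same infimum as the rank-constrained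
semidefinite formulation. -/
theorem stmt_11 (dN d0 n r : ℕ) (hn : 1 ≤ n)
    (X : Matrix (Fin d0) (Fin n) ℝ) (Y : Matrix (Fin dN) (Fin n) ℝ) :
    sInf {c : ℝ | ∃ (U : Matrix (Fin dN) (Fin r) ℝ) (V : Matrix (Fin d0) (Fin r) ℝ),
        c = (1 / (2 * n)) * frobSq (U * Vᵀ * X - Y)} =
    sInf {c : ℝ | ∃ W : Matrix (Fin dN ⊕ Fin d0) (Fin dN ⊕ Fin d0) ℝ,
        W.PosSemidef ∧ W.rank ≤ r ∧
        c = (1 / (2 * n)) * frobSq ((Pu dN d0)ᵀ * W * Pv dN d0 * X - Y)} := by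
  congr 1
  ext c
  constructor
  · rintro ⟨U, V, rfl⟩
    refine ⟨Matrix.fromRows U V * (Matrix.fromRows U V)ᵀ, ?_, ?_, ?_⟩
    · have := posSemidef_self_mul_conjTranspose (Matrix.fromRows U V)
      rwa [conjTranspose_eq_transpose_of_trivial] at this
    · calc (Matrix.fromRows U V * (Matrix.fromRows U V)ᵀ).rank
          ≤ (Matrix.fromRows U V).rank := rank_mul_le_left _ _
        _ ≤ Fintype.card (Fin r) := rank_le_card_width _
        _ = r := Fintype.card_fin r
    · congr 2
      rw [sandwich, PuT_mul, PvT_mul]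
      congr 1
  · rintro ⟨W, hW, hr, rfl⟩
    obtain ⟨B, rfl⟩ := psd_rank_factor r W hW hr
    refine ⟨(Pu dN d0)ᵀ * B, (Pv dN d0)ᵀ * B, ?_⟩
    rw [sandwich]
end

section
/- The set of positive semidefinite d×d matrices W with rank(W) ≤ r coincides with the set of W for which there exist symmetric matrices W', S ⪰ 0 satisfying tr(W') = r, W' + S = I_d, and ⟨W, S⟩ ≤ 0. -/
open Matrix

private lemma aux_trace_eq_sum_eigs {d : ℕ} (A : Matrix (Fin d) (Fin d) ℝ) (hA : A.IsHermitian) :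
    A.trace = ∑ i, hA.eigenvalues i := by
  nth_rewrite 1 [hA.spectral_theorem]
  rw [Unitary.conjStarAlgAut_apply, Matrix.trace_mul_cycle, Matrix.mem_unitaryGroup_iff'.mp hA.eigenvectorUnitary.2,
    one_mul, Matrix.trace_diagonal]
  simp

private lemma aux_eq_zero_of_trace_le {d : ℕ} (B : Matrix (Fin d) (Fin d) ℝ)
    (h : (B * Bᴴ).trace ≤ 0) : B = 0 := by
  have ht : (B * Bᴴ).trace = ∑ i, ∑ j, (B i j)^2 := by
    simp [Matrix.trace, Matrix.mul_apply, Matrix.diag, sq]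
  rw [ht] at h
  have h0 := Finset.sum_eq_zero_iff_of_nonneg
      (fun i _ => Finset.sum_nonneg fun j _ => sq_nonneg (B i j)) |>.mp
      (le_antisymm h (Finset.sum_nonneg fun i _ => Finset.sum_nonneg fun j _ => sq_nonneg (B i j)))
  ext i j
  have h1 := Finset.sum_eq_zero_iff_of_nonneg (fun j _ => sq_nonneg (B i j)) |>.mp
      (h0 i (Finset.mem_univ i)) j (Finset.mem_univ j)
  simpa using pow_eq_zero_iff (n := 2) (by norm_num) |>.mp h1

private lemma aux_eig_le_one {d : ℕ} {S W' : Matrix (Fin d) (Fin d) ℝ} (hS : S.PosSemidef)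
    (hW' : W'.PosSemidef) (hsum : W' + S = 1) (i : Fin d) :
    hS.1.eigenvalues i ≤ 1 := by
  set v : Fin d → ℝ := ⇑(hS.1.eigenvectorBasis i) with hv
  have hev : S *ᵥ v = hS.1.eigenvalues i • v := hS.1.mulVec_eigenvectorBasis i
  have hnorm : ‖hS.1.eigenvectorBasis i‖ = 1 := hS.1.eigenvectorBasis.orthonormal.1 i
  have hvv : v ⬝ᵥ v = 1 := by
    have := real_inner_self_eq_norm_sq (hS.1.eigenvectorBasis i)
    rw [hnorm, EuclideanSpace.inner_eq_star_dotProduct] at this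
    simpa [PiLp.inner_apply, dotProduct, mul_comm] using this.trans (one_pow 2)
  have h1 : (0:ℝ) ≤ star v ⬝ᵥ (W' *ᵥ v) := by
    simpa using hW'.re_dotProduct_nonneg v
  have hW'e : W' = 1 - S := by rw [← hsum]; abel
  rw [hW'e] at h1
  have h2 : (1 - S) *ᵥ v = v - hS.1.eigenvalues i • v := by
    rw [Matrix.sub_mulVec, Matrix.one_mulVec, hev]
  rw [h2] at h1
  have h3 : star v ⬝ᵥ (v - hS.1.eigenvalues i • v) = 1 - hS.1.eigenvalues i := by
    simp [dotProduct_sub, dotProduct_smul, hvv, star_trivial]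
  rw [h3] at h1
  linarith

namespace Matrix.PosSemidef

open scoped MatrixOrder in
noncomputable def sqrt {d : ℕ} {A : Matrix (Fin d) (Fin d) ℝ} (_ : A.PosSemidef) :
    Matrix (Fin d) (Fin d) ℝ := CFC.sqrt A

open scoped MatrixOrder in
lemma posSemidef_sqrt {d : ℕ} {A : Matrix (Fin d) (Fin d) ℝ} (hA : A.PosSemidef) :
    hA.sqrt.PosSemidef := (CFC.sqrt_nonneg A).posSemidef

open scoped MatrixOrder in
lemma sqrt_mul_self {d : ℕ} {A : Matrix (Fin d) (Fin d) ℝ} (hA : A.PosSemidef) :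
    hA.sqrt * hA.sqrt = A := CFC.sqrt_mul_sqrt_self A hA.nonneg

end Matrix.PosSemidef

/-- The set of PSD W with rank(W) ≤ r coincides with the set of PSD W for which there
exist W', S ⪰ 0 with tr(W') = r, W' + S = I and ⟨W, S⟩ ≤ 0. -/
theorem stmt_12 (d r : ℕ) (hr : r ≤ d) :
    {W : Matrix (Fin d) (Fin d) ℝ | W.PosSemidef ∧ W.rank ≤ r} =
    {W : Matrix (Fin d) (Fin d) ℝ | W.PosSemidef ∧
      ∃ W' S : Matrix (Fin d) (Fin d) ℝ, W'.PosSemidef ∧ S.PosSemidef ∧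
        W'.trace = (r : ℝ) ∧ W' + S = 1 ∧ (Wᵀ * S).trace ≤ 0} := by
  classical
  ext W
  simp only [Set.mem_setOf_eq]
  constructor
  · rintro ⟨hW, hrank⟩
    refine ⟨hW, ?_⟩
    have hH := hW.1
    have hcard : (Finset.univ.filter (fun i => hH.eigenvalues i ≠ 0)).card ≤ r := by
      rw [hH.rank_eq_card_non_zero_eigs, Fintype.card_subtype] at hrank
      exact hrank
    obtain ⟨T, hT₀, -, hTcard⟩ := Finset.exists_subsuperset_card_eq
      (Finset.subset_univ _) hcard (by simpa using hr)
    set U : Matrix (Fin d) (Fin d) ℝ := ↑hH.eigenvectorUnitary with hU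
    have hUU : star U * U = 1 := Matrix.mem_unitaryGroup_iff'.mp hH.eigenvectorUnitary.2
    have hUU' : U * star U = 1 := Matrix.mem_unitaryGroup_iff.mp hH.eigenvectorUnitary.2
    have key : ∀ a b : Fin d → ℝ,
        (U * diagonal a * star U) * (U * diagonal b * star U) =
          U * diagonal (a * b) * star U := by
      intro a b
      simp only [Matrix.mul_assoc]
      rw [← Matrix.mul_assoc (star U) U, hUU, one_mul,
        ← Matrix.mul_assoc (diagonal a) (diagonal b), Matrix.diagonal_mul_diagonal]
      rfl
    set f : Fin d → ℝ := fun i => if i ∈ T then 1 else 0 with hf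
    set g : Fin d → ℝ := fun i => if i ∈ T then 0 else 1 with hg
    have hWsp : W = U * diagonal hH.eigenvalues * star U := by
      have hco : (RCLike.ofReal ∘ hH.eigenvalues : Fin d → ℝ) = hH.eigenvalues := by
        funext i; simp
      have := hH.spectral_theorem
      rwa [hco] at this
    refine ⟨U * diagonal f * star U, U * diagonal g * star U, ?_, ?_, ?_, ?_, ?_⟩
    · exact (Matrix.posSemidef_diagonal_iff.mpr (fun i => by
        simp only [hf]; split <;> norm_num)).mul_mul_conjTranspose_same U
    · exact (Matrix.posSemidef_diagonal_iff.mpr (fun i => by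
        simp only [hg]; split <;> norm_num)).mul_mul_conjTranspose_same U
    · rw [Matrix.trace_mul_cycle, hUU, one_mul, Matrix.trace_diagonal]
      rw [hf]
      simp only [Finset.sum_ite_mem, Finset.univ_inter, Finset.sum_const, nsmul_eq_mul, mul_one]
      rw [hTcard]
    · rw [← Matrix.add_mul, ← Matrix.mul_add, Matrix.diagonal_add]
      have : (fun i => f i + g i) = fun _ => (1:ℝ) := by
        funext i; simp only [hf, hg]; split <;> norm_num
      rw [this, Matrix.diagonal_one, Matrix.mul_one, hUU']
    · have hWT : Wᵀ = W := by
        rw [← Matrix.conjTranspose_eq_transpose_of_trivial, hH.eq]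
      have hzero : hH.eigenvalues * g = 0 := by
        funext i
        by_cases hi : i ∈ T
        · simp [hg, hi]
        · have h0 : hH.eigenvalues i = 0 := by
            by_contra hne
            exact hi (hT₀ (Finset.mem_filter.mpr ⟨Finset.mem_univ i, hne⟩))
          simp [h0]
      rw [hWT, hWsp, key, hzero,
        show Matrix.diagonal (0 : Fin d → ℝ) = 0 from Matrix.diagonal_zero,
        Matrix.mul_zero, Matrix.zero_mul, Matrix.trace_zero]
  · rintro ⟨hW, W', S, hW', hS, htr, hsum, hWS⟩
    refine ⟨hW, ?_⟩
    have hWT : Wᵀ = W := by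
      rw [← Matrix.conjTranspose_eq_transpose_of_trivial, hW.1.eq]
    rw [hWT] at hWS
    set B := hS.sqrt * hW.sqrt with hB
    have hBB : B * Bᴴ = hS.sqrt * W * hS.sqrt := by
      rw [hB, Matrix.conjTranspose_mul, hS.posSemidef_sqrt.1.eq, hW.posSemidef_sqrt.1.eq]
      rw [Matrix.mul_assoc, ← Matrix.mul_assoc hW.sqrt, hW.sqrt_mul_self, ← Matrix.mul_assoc]
    have htrB : (B * Bᴴ).trace ≤ 0 := by
      rw [hBB, Matrix.trace_mul_cycle, hS.sqrt_mul_self, Matrix.trace_mul_comm]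
      exact hWS
    have hB0 : B = 0 := aux_eq_zero_of_trace_le _ htrB
    have hSW : S * W = 0 := by
      have h : S * W = hS.sqrt * B * hW.sqrt := by
        rw [hB, ← Matrix.mul_assoc, Matrix.mul_assoc (hS.sqrt * hS.sqrt), hW.sqrt_mul_self,
          hS.sqrt_mul_self]
      rw [h, hB0, Matrix.mul_zero, Matrix.zero_mul]
    have hrk : S.rank + W.rank ≤ d := by
      simpa using Matrix.rank_add_rank_le_card_of_mul_eq_zero hSW
    have htrS : S.trace = (d:ℝ) - r := by
      have h := congrArg Matrix.trace hsum
      rw [Matrix.trace_add, Matrix.trace_one, htr] at h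
      simp only [Finset.card_univ, Fintype.card_fin] at h
      linarith
    have hrkS : (d:ℝ) - r ≤ S.rank := by
      calc (d:ℝ) - r = S.trace := htrS.symm
        _ = ∑ i, hS.1.eigenvalues i := aux_trace_eq_sum_eigs S hS.1
        _ = ∑ i ∈ Finset.univ.filter (fun i => hS.1.eigenvalues i ≠ 0), hS.1.eigenvalues i := by
            rw [Finset.sum_filter_ne_zero]
        _ ≤ ∑ _i ∈ Finset.univ.filter (fun i => hS.1.eigenvalues i ≠ 0), (1:ℝ) :=
            Finset.sum_le_sum (fun i _ => aux_eig_le_one hS hW' hsum i)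
        _ = ((Finset.univ.filter (fun i => hS.1.eigenvalues i ≠ 0)).card : ℝ) := by simp
        _ = (S.rank : ℝ) := by
            rw [hS.1.rank_eq_card_non_zero_eigs, Fintype.card_subtype]
    have hd : d ≤ r + S.rank := by exact_mod_cast (by linarith : (d:ℝ) ≤ r + S.rank)
    omega
end

section
/- Let K ⊂ ℝ^p be a closed convex cone and CP_K = conv{z zᵀ : z ∈ K}. For any vector a ∈ ℝ^p and scalar b, if a matrix [[1, zᵀ],[z, Z]] ∈ CP_{ℝ_+ × K} (the completely positive cone over the augmented cone, with the (1,1) entry equal to 1) satisfies aᵀ z = b and ⟨a aᵀ, Z⟩ = b², then in every decomposition into rank-one atoms generated by (1, z_i) with z_i ∈ K, each atom satisfies aᵀ z_i = b. -/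
open Matrix

lemma trace_vecMulVec_mul_vecMulVec {p : ℕ} (a v : Fin p → ℝ) :
    ((vecMulVec a a)ᵀ * vecMulVec v v).trace = (a ⬝ᵥ v) ^ 2 := by
  simp only [Matrix.trace, Matrix.diag, Matrix.mul_apply, vecMulVec_apply,
    Matrix.transpose_apply, dotProduct]
  rw [sq, Finset.sum_mul_sum]
  rw [Finset.sum_comm]
  congr 1; ext i; congr 1; ext j; ring

/-- Variance argument: if a CP matrix [[1, zᵀ],[z, Z]] over the augmented cone
ℝ₊ × K satisfies aᵀz = b and ⟨aaᵀ, Z⟩ = b², then in every decomposition into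
rank-one atoms generated by (1, z_i), z_i ∈ K, each atom with positive weight
satisfies aᵀ z_i = b. -/
theorem stmt_19 (p : ℕ) (K : Set (Fin p → ℝ)) (hclosed : IsClosed K)
    (hconv : Convex ℝ K) (hcone : ∀ c : ℝ, 0 ≤ c → ∀ z ∈ K, c • z ∈ K)
    (a : Fin p → ℝ) (b : ℝ) (z : Fin p → ℝ) (Z : Matrix (Fin p) (Fin p) ℝ)
    (n : ℕ) (lam : Fin n → ℝ) (zi : Fin n → Fin p → ℝ)
    (hlam : ∀ i, 0 ≤ lam i) (hzi : ∀ i, zi i ∈ K)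
    (hsum1 : ∑ i, lam i = 1)
    (hz : z = ∑ i, lam i • zi i)
    (hZ : Z = ∑ i, lam i • vecMulVec (zi i) (zi i))
    (haz : a ⬝ᵥ z = b)
    (haZ : ((vecMulVec a a)ᵀ * Z).trace = b ^ 2) :
    ∀ i, 0 < lam i → a ⬝ᵥ zi i = b := by
  -- first moment
  have h1 : ∑ i, lam i * (a ⬝ᵥ zi i) = b := by
    rw [← haz, hz]
    simp only [dotProduct, Finset.mul_sum, Pi.smul_apply, smul_eq_mul,
      Finset.sum_apply]
    rw [Finset.sum_comm]
    congr 1; ext i; congr 1; ext j; ring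
  -- second moment
  have h2 : ∑ i, lam i * (a ⬝ᵥ zi i) ^ 2 = b ^ 2 := by
    rw [← haZ, hZ, Matrix.mul_sum, Matrix.trace_sum]
    congr 1; ext i
    rw [Matrix.mul_smul, Matrix.trace_smul, trace_vecMulVec_mul_vecMulVec,
      smul_eq_mul]
  -- variance is zero
  have hvar : ∑ i, lam i * (a ⬝ᵥ zi i - b) ^ 2 = 0 := by
    have : ∀ i, lam i * (a ⬝ᵥ zi i - b) ^ 2 =
        lam i * (a ⬝ᵥ zi i) ^ 2 - 2 * b * (lam i * (a ⬝ᵥ zi i)) + b ^ 2 * lam i := by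
      intro i; ring
    simp_rw [this]
    rw [Finset.sum_add_distrib, Finset.sum_sub_distrib, ← Finset.mul_sum,
      ← Finset.mul_sum, h1, h2, hsum1]
    ring
  intro i hi
  have hterm : ∀ j ∈ Finset.univ, 0 ≤ lam j * (a ⬝ᵥ zi j - b) ^ 2 := fun j _ =>
    mul_nonneg (hlam j) (sq_nonneg _)
  have := (Finset.sum_eq_zero_iff_of_nonneg hterm).mp hvar i (Finset.mem_univ i)
  have h0 : (a ⬝ᵥ zi i - b) ^ 2 = 0 := by
    rcases mul_eq_zero.mp this with h | h
    · exact absurd h hi.ne'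
    · exact h
  have := pow_eq_zero_iff (n := 2) (by norm_num) |>.mp h0
  linarith [this]
end
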